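/- Let ω_n(λ) = Σ_{m≥1} β_n^{(m)} λ^{-m} be formal power series in λ^{-1} with coefficients satisfying m·β_n^{(m)} = n·β_m^{(n)}. Set q_{mn} = m β_n^{(m)} and s_n = (n/2) Σ_{j=1}^{n−1} q_{n−j,j}/(j(n−j)). Then the quadratic function Q(t) = (1/2)Σ_{i,j≥1} q_{ij} t_i t_j + Σ_{i≥2} s_i t_i satisfies −Q(t − [λ^{-1}]) + Q(t) = Σ_{n≥1} ω_n(λ) t_n, where t − [λ^{-1}] = (t₁ − λ^{-1}, t₂ − 1/(2λ²), t₃ − 1/(3λ³), ...). -/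

import Mathlib

open Polynomial

/-- The (truncated) quadratic function
`Q(u) = (1/2)Σ_{1≤i,j≤N} q_{ij} u_i u_j + Σ_{2≤i≤N} s_i u_i`, evaluated on a sequence of
polynomials `u` in the formal variable `X = λ^{-1}`. -/
noncomputable def Qquad {F : Type*} [Field F] (N : ℕ) (q : ℕ → ℕ → F) (s : ℕ → F)
    (u : ℕ → Polynomial F) : Polynomial F :=
  C (1/2 : F) * ∑ i ∈ Finset.Icc 1 N, ∑ j ∈ Finset.Icc 1 N, C (q i j) * (u i * u j)
    + ∑ i ∈ Finset.Icc 2 N, C (s i) * u i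

private lemma coeff_prod_aux {F : Type*} [Field F] (a b c d : F) (i j m : ℕ) (hm : 1 ≤ m) :
    ((C a - C b * X ^ i) * (C c - C d * X ^ j)).coeff m
      = (if m = i then -(b * c) else 0) + (if m = j then -(a * d) else 0)
        + (if m = i + j then b * d else 0) := by
  have h : (C a - C b * X ^ i) * (C c - C d * X ^ j)
      = C (a * c) - C (a * d) * X ^ j - C (b * c) * X ^ i + C (b * d) * X ^ (i + j) := by
    simp only [C_mul, pow_add]; ring
  have hm0 : m ≠ 0 := by omega
  rw [h]
  simp only [coeff_add, coeff_sub, coeff_C_mul, coeff_X_pow, coeff_C, hm0, if_false,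
    mul_ite, mul_one, mul_zero]
  split_ifs <;> ring

/-- Let `ω_n(λ) = Σ_{m≥1} β_n^{(m)} λ^{-m}` with `m β_n^{(m)} = n β_m^{(n)}`, and set
`q_{mn} = m β_n^{(m)}`, `s_n = (n/2) Σ_{j=1}^{n−1} q_{n−j,j}/(j(n−j))`.  Then
`−Q(t − [λ^{-1}]) + Q(t) = Σ_n ω_n(λ) t_n` as formal power series in `λ^{-1}`:  for each
power `λ^{-m}` (with `1 ≤ m ≤ N`, `N` a truncation bound past the support of `t`), the
coefficients of the two sides agree.  Here `X` plays the role of `λ^{-1}` and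
`[λ^{-1}]_i = λ^{-i}/i = X^i/i`. -/
theorem Q_generates_omega {F : Type*} [Field F] [CharZero F]
    (β : ℕ → ℕ → F)
    (hsym : ∀ m n : ℕ, 1 ≤ m → 1 ≤ n → (m : F) * β n m = (n : F) * β m n)
    (q : ℕ → ℕ → F) (hq : ∀ m n, q m n = (m : F) * β n m)
    (s : ℕ → F)
    (hs : ∀ n, s n = ((n : F) / 2)
      * ∑ j ∈ Finset.Icc 1 (n - 1), q (n - j) j / ((j : F) * ((n : F) - (j : F))))
    (t : ℕ → F) (M N : ℕ) (ht : ∀ i, M < i → t i = 0) (hMN : M ≤ N)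
    (m : ℕ) (hm1 : 1 ≤ m) (hmN : m ≤ N) :
    (Qquad N q s (fun i => C (t i))
        - Qquad N q s (fun i => C (t i) - C ((i : F))⁻¹ * X ^ i)).coeff m
      = ∑ n ∈ Finset.Icc 1 N, β n m * t n := by
  have hm0 : m ≠ 0 := by omega
  have hmF : (m : F) ≠ 0 := Nat.cast_ne_zero.mpr hm0
  have hmem : m ∈ Finset.Icc 1 N := Finset.mem_Icc.mpr ⟨hm1, hmN⟩
  -- the first Q is a constant polynomial
  have h1 : (Qquad N q s (fun i => C (t i))).coeff m = 0 := by
    simp only [Qquad, ← C_mul]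
    simp [finset_sum_coeff, coeff_C, hm0]
  rw [coeff_sub, h1, zero_sub]
  -- coefficient of the second Q
  have h2 : (Qquad N q s (fun i => C (t i) - C ((i : F))⁻¹ * X ^ i)).coeff m =
      (1/2 : F) * (∑ i ∈ Finset.Icc 1 N, ∑ j ∈ Finset.Icc 1 N, q i j *
        ((if m = i then -(((i : F))⁻¹ * t j) else 0) + (if m = j then -(t i * ((j : F))⁻¹) else 0)
          + (if m = i + j then ((i : F))⁻¹ * ((j : F))⁻¹ else 0)))
      + ∑ i ∈ Finset.Icc 2 N, s i * (if m = i then -((i : F))⁻¹ else 0) := by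
    simp only [Qquad, coeff_add, coeff_C_mul, finset_sum_coeff]
    congr 1
    · congr 1
      refine Finset.sum_congr rfl fun i _ => Finset.sum_congr rfl fun j _ => ?_
      rw [coeff_prod_aux _ _ _ _ _ _ _ hm1]
    · refine Finset.sum_congr rfl fun i _ => ?_
      simp only [coeff_sub, coeff_C_mul, coeff_C, coeff_X_pow, hm0, if_false, mul_ite,
        mul_one, mul_zero, zero_sub, mul_neg]
      split_ifs <;> simp
  rw [h2]
  -- expand the triple of if's
  rw [show (∑ i ∈ Finset.Icc 1 N, ∑ j ∈ Finset.Icc 1 N, q i j *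
        ((if m = i then -(((i : F))⁻¹ * t j) else 0) + (if m = j then -(t i * ((j : F))⁻¹) else 0)
          + (if m = i + j then ((i : F))⁻¹ * ((j : F))⁻¹ else 0)))
      = (∑ i ∈ Finset.Icc 1 N, ∑ j ∈ Finset.Icc 1 N,
          (if m = i then q i j * -(((i : F))⁻¹ * t j) else 0))
        + (∑ i ∈ Finset.Icc 1 N, ∑ j ∈ Finset.Icc 1 N,
          (if m = j then q i j * -(t i * ((j : F))⁻¹) else 0))
        + (∑ i ∈ Finset.Icc 1 N, ∑ j ∈ Finset.Icc 1 N,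
          (if m = i + j then q i j * (((i : F))⁻¹ * ((j : F))⁻¹) else 0)) from by
      rw [← Finset.sum_add_distrib, ← Finset.sum_add_distrib]
      refine Finset.sum_congr rfl fun i _ => ?_
      rw [← Finset.sum_add_distrib, ← Finset.sum_add_distrib]
      refine Finset.sum_congr rfl fun j _ => ?_
      simp only [mul_add, mul_ite, mul_zero]]
  -- evaluate the three double sums
  have hA : (∑ i ∈ Finset.Icc 1 N, ∑ j ∈ Finset.Icc 1 N,
        (if m = i then q i j * -(((i : F))⁻¹ * t j) else 0))
      = ∑ j ∈ Finset.Icc 1 N, -(β j m * t j) := by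
    rw [show (∑ i ∈ Finset.Icc 1 N, ∑ j ∈ Finset.Icc 1 N,
          (if m = i then q i j * -(((i : F))⁻¹ * t j) else 0))
        = ∑ i ∈ Finset.Icc 1 N, (if m = i then
            ∑ j ∈ Finset.Icc 1 N, q i j * -(((i : F))⁻¹ * t j) else 0) from
      Finset.sum_congr rfl fun i _ => by split_ifs <;> simp]
    rw [Finset.sum_ite_eq _ m _, if_pos hmem]
    refine Finset.sum_congr rfl fun j hj => ?_
    rw [hq]
    field_simp
  have hB : (∑ i ∈ Finset.Icc 1 N, ∑ j ∈ Finset.Icc 1 N,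
        (if m = j then q i j * -(t i * ((j : F))⁻¹) else 0))
      = ∑ i ∈ Finset.Icc 1 N, -(β i m * t i) := by
    refine Finset.sum_congr rfl fun i hi => ?_
    rw [Finset.sum_ite_eq _ m _, if_pos hmem]
    have hi1 : 1 ≤ i := (Finset.mem_Icc.mp hi).1
    have : q i m = (m : F) * β i m := by rw [hq]; exact hsym i m hi1 hm1
    rw [this]
    field_simp
  have hC : (∑ i ∈ Finset.Icc 1 N, ∑ j ∈ Finset.Icc 1 N,
        (if m = i + j then q i j * (((i : F))⁻¹ * ((j : F))⁻¹) else 0))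
      = ∑ i ∈ Finset.Icc 1 (m-1), q i (m - i) * (((i : F))⁻¹ * (((m - i : ℕ) : F))⁻¹) := by
    have step1 : ∀ i ∈ Finset.Icc 1 N, (∑ j ∈ Finset.Icc 1 N,
        (if m = i + j then q i j * (((i : F))⁻¹ * ((j : F))⁻¹) else 0))
        = (if i < m then q i (m - i) * (((i : F))⁻¹ * (((m - i : ℕ) : F))⁻¹) else 0) := by
      intro i hi
      have hi1 : 1 ≤ i := (Finset.mem_Icc.mp hi).1
      by_cases him : i < m
      · rw [if_pos him]
        rw [Finset.sum_eq_single (m - i)]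
        · rw [if_pos (by omega)]
        · intro j _ hj
          rw [if_neg (by omega)]
        · intro habs
          exact absurd (Finset.mem_Icc.mpr ⟨by omega, by omega⟩) habs
      · rw [if_neg him]
        refine Finset.sum_eq_zero fun j hj => ?_
        have : 1 ≤ j := (Finset.mem_Icc.mp hj).1
        rw [if_neg (by omega)]
    rw [Finset.sum_congr rfl step1]
    rw [← Finset.sum_subset (Finset.Icc_subset_Icc_right (by omega) :
        Finset.Icc 1 (m-1) ⊆ Finset.Icc 1 N)]
    · refine Finset.sum_congr rfl fun i hi => ?_
      have := Finset.mem_Icc.mp hi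
      rw [if_pos (by omega)]
    · intro i hi hi2
      rw [if_neg (by simp only [Finset.mem_Icc] at hi hi2 ⊢; omega)]
  have hS : (∑ i ∈ Finset.Icc 2 N, s i * (if m = i then -((i : F))⁻¹ else 0))
      = if m ∈ Finset.Icc 2 N then s m * -((m : F))⁻¹ else 0 := by
    rw [show (∑ i ∈ Finset.Icc 2 N, s i * (if m = i then -((i : F))⁻¹ else 0))
        = ∑ i ∈ Finset.Icc 2 N, (if m = i then s i * -((i : F))⁻¹ else 0) from
      Finset.sum_congr rfl fun i _ => by split_ifs <;> simp]
    exact Finset.sum_ite_eq _ m _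
  rw [hA, hB, hC, hS]
  -- the linear counterterm cancels the diagonal quadratic contribution
  have hcancel : (1/2 : F) * (∑ i ∈ Finset.Icc 1 (m-1),
        q i (m - i) * (((i : F))⁻¹ * (((m - i : ℕ) : F))⁻¹))
      + (if m ∈ Finset.Icc 2 N then s m * -((m : F))⁻¹ else 0) = 0 := by
    rcases eq_or_lt_of_le hm1 with h | h
    · have hm1' : m = 1 := h.symm
      rw [if_neg (by simp [Finset.mem_Icc, hm1'])]
      rw [show m - 1 = 0 by omega]
      simp
    · have hm2 : 2 ≤ m := h
      rw [if_pos (Finset.mem_Icc.mpr ⟨hm2, hmN⟩), hs m]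
      have hre : (∑ j ∈ Finset.Icc 1 (m - 1), q (m - j) j / ((j : F) * ((m : F) - (j : F))))
          = ∑ i ∈ Finset.Icc 1 (m-1), q i (m - i) * (((i : F))⁻¹ * (((m - i : ℕ) : F))⁻¹) := by
        refine Finset.sum_nbij' (fun j => m - j) (fun i => m - i) ?_ ?_ ?_ ?_ ?_
        · intro a ha; simp only [Finset.mem_Icc] at ha ⊢; omega
        · intro a ha; simp only [Finset.mem_Icc] at ha ⊢; omega
        · intro a ha; simp only [Finset.mem_Icc] at ha; omega
        · intro a ha; simp only [Finset.mem_Icc] at ha; omega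
        · intro j hj
          simp only [Finset.mem_Icc] at hj
          have h1 : m - (m - j) = j := by omega
          have h2 : ((m - j : ℕ) : F) = (m : F) - (j : F) := by
            rw [Nat.cast_sub (by omega)]
          rw [h1, h2, div_eq_mul_inv, mul_inv]
          ring
      rw [hre]
      field_simp
      ring
  rw [← Finset.sum_add_distrib]
  have : ∀ n ∈ Finset.Icc 1 N, -(β n m * t n) + -(β n m * t n) = -2 * (β n m * t n) := by
    intro n _; ring
  rw [neg_eq_iff_eq_neg]
  have expand : (1/2 : F) * ((∑ n ∈ Finset.Icc 1 N, (-(β n m * t n) + -(β n m * t n)))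
        + (∑ i ∈ Finset.Icc 1 (m-1), q i (m - i) * (((i : F))⁻¹ * (((m - i : ℕ) : F))⁻¹)))
      + (if m ∈ Finset.Icc 2 N then s m * -((m : F))⁻¹ else 0)
      = (1/2 : F) * (∑ n ∈ Finset.Icc 1 N, (-(β n m * t n) + -(β n m * t n)))
        + ((1/2 : F) * (∑ i ∈ Finset.Icc 1 (m-1),
            q i (m - i) * (((i : F))⁻¹ * (((m - i : ℕ) : F))⁻¹))
          + (if m ∈ Finset.Icc 2 N then s m * -((m : F))⁻¹ else 0)) := by ring
  rw [expand, hcancel, add_zero, Finset.sum_congr rfl this]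
  rw [Finset.mul_sum, ← Finset.sum_neg_distrib]
  refine Finset.sum_congr rfl fun n _ => by ring
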